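/- Let κ ≥ 1 and λ̂ ≥ 0 be real numbers and define g(μ) := (min(max(μ, λ̂), κμ) − λ̂)² for μ > 0. Then g is convex on the interval (0, ∞), differentiable at every μ > 0 with derivative g′(μ) = 2κ(κμ − λ̂) when κμ < λ̂, g′(μ) = 0 when μ ≤ λ̂ ≤ κμ, and g′(μ) = 2(μ − λ̂) when μ > λ̂, and g′ is continuous on (0, ∞). -/

import Mathlib

/-- `gfun κ λ̂ μ = (min (max μ λ̂) (κμ) − λ̂)²`. -/
noncomputable def gfun (κ lamh μ : ℝ) : ℝ := (min (max μ lamh) (κ * μ) - lamh) ^ 2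

lemma sqplus_hasDerivAt (x : ℝ) :
    HasDerivAt (fun y : ℝ => (max y 0) ^ 2) (2 * max x 0) x := by
  rcases lt_trichotomy x 0 with h | h | h
  · have hc : HasDerivAt (fun _ : ℝ => (0 : ℝ)) 0 x := hasDerivAt_const x 0
    have heq : (fun y : ℝ => (max y 0) ^ 2) =ᶠ[nhds x] fun _ => (0 : ℝ) := by
      filter_upwards [Iio_mem_nhds h] with y hy
      rw [max_eq_right (Set.mem_Iio.mp hy).le]
      norm_num
    rw [max_eq_right h.le, mul_zero]
    exact hc.congr_of_eventuallyEq heq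
  · subst h
    rw [max_self, mul_zero]
    rw [hasDerivAt_iff_isLittleO]
    have h1 : (fun y : ℝ => (max y 0) ^ 2 - (max (0:ℝ) 0) ^ 2 - (y - 0) • (0:ℝ))
        =O[nhds (0:ℝ)] (fun y => y ^ 2) := by
      apply Asymptotics.IsBigO.of_bound 1
      filter_upwards with y
      have hb : (max y 0) ^ 2 ≤ y ^ 2 := by
        rcases le_total y 0 with hy | hy
        · rw [max_eq_right hy]; simpa using sq_nonneg y
        · rw [max_eq_left hy]
      have e1 : (max y 0) ^ 2 - (max (0:ℝ) 0) ^ 2 - (y - 0) • (0:ℝ) = (max y 0) ^ 2 := by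
        rw [max_self]; ring_nf
      rw [e1, Real.norm_eq_abs, Real.norm_eq_abs, one_mul,
        abs_of_nonneg (by positivity : (0:ℝ) ≤ (max y 0) ^ 2),
        abs_of_nonneg (sq_nonneg y)]
      exact hb
    have h2 : (fun y : ℝ => y ^ 2) =o[nhds (0:ℝ)] (fun y => y - 0) := by
      have := (hasDerivAt_pow 2 (0:ℝ))
      rw [hasDerivAt_iff_isLittleO] at this
      simpa using this
    exact h1.trans_isLittleO h2
  · have heq : (fun y : ℝ => (max y 0) ^ 2) =ᶠ[nhds x] fun y => y ^ 2 := by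
      filter_upwards [Ioi_mem_nhds h] with y hy
      rw [max_eq_left (Set.mem_Ioi.mp hy).le]
    rw [max_eq_left h.le]
    have hp : HasDerivAt (fun y : ℝ => y ^ 2) (2 * x) x := by
      simpa using hasDerivAt_pow 2 x
    exact hp.congr_of_eventuallyEq heq
lemma sqmin_hasDerivAt (x : ℝ) :
    HasDerivAt (fun y : ℝ => (min y 0) ^ 2) (2 * min x 0) x := by
  have h := (sqplus_hasDerivAt (-x)).comp x (hasDerivAt_neg x)
  have heq : (fun y : ℝ => (max (-y) 0) ^ 2) = fun y : ℝ => (min y 0) ^ 2 := by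
    funext y
    rcases le_total y 0 with hy | hy
    · rw [max_eq_left (by linarith), min_eq_left hy]; ring
    · rw [max_eq_right (by linarith), min_eq_right hy]
  have h2 : HasDerivAt (fun y : ℝ => (min y 0) ^ 2) (2 * max (-x) 0 * (-1)) x := by
    rw [← heq]; exact h
  convert h2 using 1
  rcases le_total x 0 with hx | hx
  · rw [min_eq_left hx, max_eq_left (by linarith)]; ring
  · rw [min_eq_right hx, max_eq_right (by linarith)]; ring

theorem stmt7 (κ lamh : ℝ) (hκ : 1 ≤ κ) (hlam : 0 ≤ lamh) :
    ConvexOn ℝ (Set.Ioi (0 : ℝ)) (gfun κ lamh) ∧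
    (∀ μ : ℝ, 0 < μ → DifferentiableAt ℝ (gfun κ lamh) μ) ∧
    (∀ μ : ℝ, 0 < μ → κ * μ < lamh →
      HasDerivAt (gfun κ lamh) (2 * κ * (κ * μ - lamh)) μ) ∧
    (∀ μ : ℝ, 0 < μ → μ ≤ lamh → lamh ≤ κ * μ →
      HasDerivAt (gfun κ lamh) 0 μ) ∧
    (∀ μ : ℝ, 0 < μ → lamh < μ →
      HasDerivAt (gfun κ lamh) (2 * (μ - lamh)) μ) ∧
    ContinuousOn (deriv (gfun κ lamh)) (Set.Ioi (0 : ℝ)) := by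
  set h : ℝ → ℝ := fun μ => (min (κ * μ - lamh) 0) ^ 2 + (max (μ - lamh) 0) ^ 2 with hh
  set D : ℝ → ℝ := fun μ => 2 * min (κ * μ - lamh) 0 * κ + 2 * max (μ - lamh) 0 with hD
  have hκ0 : (0:ℝ) ≤ κ := le_trans zero_le_one hκ
  -- g = h on Ioi 0
  have hgh : ∀ μ : ℝ, 0 < μ → gfun κ lamh μ = h μ := by
    intro μ hμ
    have hμκ : μ ≤ κ * μ := le_mul_of_one_le_left hμ.le hκ
    rcases le_total μ lamh with h1 | h1
    · rcases le_total (κ * μ) lamh with h2 | h2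
      · simp [gfun, hh, max_eq_right h1, min_eq_right h2,
          min_eq_left (sub_nonpos.mpr h2), max_eq_right (sub_nonpos.mpr h1)]
      · simp [gfun, hh, max_eq_right h1, min_eq_left h2,
          min_eq_right (sub_nonneg.mpr h2), max_eq_right (sub_nonpos.mpr h1)]
    · have h2 : lamh ≤ κ * μ := le_trans h1 hμκ
      simp [gfun, hh, max_eq_left h1, min_eq_left hμκ,
        min_eq_right (sub_nonneg.mpr h2), max_eq_left (sub_nonneg.mpr h1)]
  -- h has derivative D everywhere
  have hD' : ∀ μ : ℝ, HasDerivAt h (D μ) μ := by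
    intro μ
    have h1 : HasDerivAt (fun y : ℝ => (min (κ * y - lamh) 0) ^ 2)
        (2 * min (κ * μ - lamh) 0 * κ) μ := by
      have haf : HasDerivAt (fun y : ℝ => κ * y - lamh) κ μ := by
        simpa using ((hasDerivAt_id μ).const_mul κ).sub_const lamh
      exact (sqmin_hasDerivAt (κ * μ - lamh)).comp μ haf
    have h2 : HasDerivAt (fun y : ℝ => (max (y - lamh) 0) ^ 2)
        (2 * max (μ - lamh) 0) μ := by
      have haf : HasDerivAt (fun y : ℝ => y - lamh) 1 μ := (hasDerivAt_id μ).sub_const lamh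
      simpa [Function.comp_def] using (sqplus_hasDerivAt (μ - lamh)).comp μ haf
    exact h1.add h2
  -- g has derivative D at each μ > 0
  have hgD : ∀ μ : ℝ, 0 < μ → HasDerivAt (gfun κ lamh) (D μ) μ := by
    intro μ hμ
    apply (hD' μ).congr_of_eventuallyEq
    filter_upwards [Ioi_mem_nhds hμ] with y hy
    exact hgh y hy
  have hderiv : ∀ μ : ℝ, 0 < μ → deriv (gfun κ lamh) μ = D μ := fun μ hμ =>
    (hgD μ hμ).deriv
  have hDcont : Continuous D := by
    apply Continuous.add
    · exact (continuous_const.mul (((continuous_const.mul continuous_id).sub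
        continuous_const).min continuous_const)).mul continuous_const
    · exact continuous_const.mul ((continuous_id.sub continuous_const).max continuous_const)
  have hDmono : Monotone D := by
    intro a b hab
    have h1 : min (κ * a - lamh) 0 ≤ min (κ * b - lamh) 0 := by
      apply min_le_min _ le_rfl
      nlinarith
    have h2 : max (a - lamh) 0 ≤ max (b - lamh) 0 := by
      apply max_le_max _ le_rfl
      linarith
    have := mul_le_mul_of_nonneg_right h1 hκ0
    simp only [hD]
    nlinarith
  refine ⟨?_, ?_, ?_, ?_, ?_, ?_⟩
  · -- convexity
    apply MonotoneOn.convexOn_of_deriv (convex_Ioi 0)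
    · intro μ hμ
      exact (hgD μ hμ).continuousAt.continuousWithinAt
    · rw [interior_Ioi]
      intro μ hμ
      exact (hgD μ hμ).differentiableAt.differentiableWithinAt
    · rw [interior_Ioi]
      intro a ha b hb hab
      rw [hderiv a ha, hderiv b hb]
      exact hDmono hab
  · intro μ hμ
    exact (hgD μ hμ).differentiableAt
  · intro μ hμ hlt
    have hμκ : μ ≤ κ * μ := le_mul_of_one_le_left hμ.le hκ
    have := hgD μ hμ
    convert this using 1
    simp only [hD]
    rw [min_eq_left (by linarith), max_eq_right (by linarith)]
    ring
  · intro μ hμ h1 h2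
    have := hgD μ hμ
    convert this using 1
    simp only [hD]
    rw [min_eq_right (by linarith), max_eq_right (by linarith)]
    ring
  · intro μ hμ h1
    have hμκ : μ ≤ κ * μ := le_mul_of_one_le_left hμ.le hκ
    have := hgD μ hμ
    convert this using 1
    simp only [hD]
    rw [min_eq_right (by linarith), max_eq_left (by linarith)]
    ring
  · apply ContinuousOn.congr (hDcont.continuousOn)
    intro μ hμ
    exact hderiv μ hμ
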